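/- arXiv:2509.09578 — 5 statements merged into one kernel-verified Lean document; each statement's English description precedes it below -/
import Mathlib

section
/- If positive integers n, ℓ, m, d with n ≥ 5, 1 ≤ d ≤ 9 and m ≥ 2 satisfy (T_n + 1)(T_{n+1} + 1)⋯(T_{n+ℓ-1} + 1) = d·(10^m − 1)/9, then ℓ ≤ 7. -/
/-- The Tribonacci sequence: T 0 = 0, T 1 = T 2 = 1, T (n+3) = T (n+2) + T (n+1) + T n. -/
def trib : ℕ → ℕ
  | 0 => 0
  | 1 => 1
  | 2 => 1
  | n + 3 => trib (n + 2) + trib (n + 1) + trib n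

lemma trib_mod2 (n : ℕ) : trib n % 2 = if n % 4 = 1 ∨ n % 4 = 2 then 1 else 0 := by
  induction n using Nat.strong_induction_on with
  | _ n ih =>
    match n with
    | 0 => rfl
    | 1 => rfl
    | 2 => rfl
    | (k+3) =>
      have h0 := ih k (by omega)
      have h1 := ih (k+1) (by omega)
      have h2 := ih (k+2) (by omega)
      show (trib (k+2) + trib (k+1) + trib k) % 2 = _
      split_ifs at h0 h1 h2 ⊢ <;> omega

lemma two_dvd_trib_succ (k : ℕ) (h : k % 4 = 1 ∨ k % 4 = 2) : 2 ∣ trib k + 1 := by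
  have := trib_mod2 k
  rw [if_pos h] at this
  omega

lemma sixteen_dvd {a b c d e : ℕ} (ha : 2 ∣ a) (hb : 2 ∣ b) (hc : 2 ∣ c) (hd : 2 ∣ d) :
    16 ∣ a * b * c * d * e := by
  obtain ⟨a, rfl⟩ := ha; obtain ⟨b, rfl⟩ := hb
  obtain ⟨c, rfl⟩ := hc; obtain ⟨d, rfl⟩ := hd
  exact ⟨a * b * c * d * e, by ring⟩

lemma key (n : ℕ) : 16 ∣ ∏ i ∈ Finset.range 8, (trib (n + i) + 1) := by
  have hp : ∏ i ∈ Finset.range 8, (trib (n + i) + 1) =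
      (trib (n+0)+1) * (trib (n+1)+1) * (trib (n+2)+1) * (trib (n+3)+1) *
      (trib (n+4)+1) * (trib (n+5)+1) * (trib (n+6)+1) * (trib (n+7)+1) := by
    simp [Finset.prod_range_succ]
  rw [hp]
  have h : ∀ i : ℕ, (n + i) % 4 = 1 ∨ (n + i) % 4 = 2 → 2 ∣ trib (n + i) + 1 :=
    fun i hi => two_dvd_trib_succ _ hi
  have hm4 : n % 4 = 0 ∨ n % 4 = 1 ∨ n % 4 = 2 ∨ n % 4 = 3 := by omega
  rcases hm4 with h4 | h4 | h4 | h4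
  · have e1 := h 1 (by omega); have e2 := h 2 (by omega)
    have e5 := h 5 (by omega); have e6 := h 6 (by omega)
    have : (trib (n+0)+1) * (trib (n+1)+1) * (trib (n+2)+1) * (trib (n+3)+1) *
      (trib (n+4)+1) * (trib (n+5)+1) * (trib (n+6)+1) * (trib (n+7)+1) =
      (trib (n+1)+1) * (trib (n+2)+1) * (trib (n+5)+1) * (trib (n+6)+1) *
      ((trib (n+0)+1) * (trib (n+3)+1) * (trib (n+4)+1) * (trib (n+7)+1)) := by ring
    rw [this]; exact sixteen_dvd e1 e2 e5 e6
  · have e1 := h 0 (by omega); have e2 := h 1 (by omega)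
    have e5 := h 4 (by omega); have e6 := h 5 (by omega)
    have : (trib (n+0)+1) * (trib (n+1)+1) * (trib (n+2)+1) * (trib (n+3)+1) *
      (trib (n+4)+1) * (trib (n+5)+1) * (trib (n+6)+1) * (trib (n+7)+1) =
      (trib (n+0)+1) * (trib (n+1)+1) * (trib (n+4)+1) * (trib (n+5)+1) *
      ((trib (n+2)+1) * (trib (n+3)+1) * (trib (n+6)+1) * (trib (n+7)+1)) := by ring
    rw [this]; exact sixteen_dvd e1 e2 e5 e6
  · have e1 := h 0 (by omega); have e2 := h 3 (by omega)
    have e5 := h 4 (by omega); have e6 := h 7 (by omega)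
    have : (trib (n+0)+1) * (trib (n+1)+1) * (trib (n+2)+1) * (trib (n+3)+1) *
      (trib (n+4)+1) * (trib (n+5)+1) * (trib (n+6)+1) * (trib (n+7)+1) =
      (trib (n+0)+1) * (trib (n+3)+1) * (trib (n+4)+1) * (trib (n+7)+1) *
      ((trib (n+1)+1) * (trib (n+2)+1) * (trib (n+5)+1) * (trib (n+6)+1)) := by ring
    rw [this]; exact sixteen_dvd e1 e2 e5 e6
  · have e1 := h 2 (by omega); have e2 := h 3 (by omega)
    have e5 := h 6 (by omega); have e6 := h 7 (by omega)
    have : (trib (n+0)+1) * (trib (n+1)+1) * (trib (n+2)+1) * (trib (n+3)+1) *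
      (trib (n+4)+1) * (trib (n+5)+1) * (trib (n+6)+1) * (trib (n+7)+1) =
      (trib (n+2)+1) * (trib (n+3)+1) * (trib (n+6)+1) * (trib (n+7)+1) *
      ((trib (n+0)+1) * (trib (n+1)+1) * (trib (n+4)+1) * (trib (n+5)+1)) := by ring
    rw [this]; exact sixteen_dvd e1 e2 e5 e6

/-- If positive integers `n, ℓ, m, d` with `n ≥ 5`, `1 ≤ d ≤ 9` and `m ≥ 2` satisfy
`(T_n + 1)(T_{n+1} + 1) ⋯ (T_{n+ℓ-1} + 1) = d * (10 ^ m - 1) / 9`, then `ℓ ≤ 7`. -/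
theorem length_le_seven_of_repdigit_prod_trib_plus_one
    (n ℓ m d : ℕ) (hn : 5 ≤ n) (hℓ : 0 < ℓ) (hm : 2 ≤ m) (hd1 : 1 ≤ d) (hd9 : d ≤ 9)
    (heq : 9 * ∏ i ∈ Finset.range ℓ, (trib (n + i) + 1) = d * (10 ^ m - 1)) :
    ℓ ≤ 7 := by
  by_contra h
  push_neg at h
  obtain ⟨k, rfl⟩ : ∃ k, ℓ = 8 + k := ⟨ℓ - 8, by omega⟩
  rw [Finset.prod_range_add] at heq
  have h16 : (16 : ℕ) ∣ d * (10 ^ m - 1) := by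
    rw [← heq]
    exact Dvd.dvd.mul_left (Dvd.dvd.mul_right (key n) _) 9
  have hodd : (10 ^ m - 1) % 2 = 1 := by
    have h2 : 2 ∣ 10 ^ m := dvd_pow (by norm_num) (by omega)
    have h1 : 1 ≤ 10 ^ m := Nat.one_le_pow _ _ (by norm_num)
    omega
  have hcop : Nat.Coprime 16 (10 ^ m - 1) := by
    have : Nat.Coprime 2 (10 ^ m - 1) :=
      (Nat.prime_two.coprime_iff_not_dvd).mpr (by omega)
    exact (this.pow_left 4 : Nat.Coprime (2^4) _)
  have hdd : (16 : ℕ) ∣ d := hcop.dvd_of_dvd_mul_right h16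
  have := Nat.le_of_dvd (by omega) hdd
  omega
end

section
/- If positive integers n, ℓ, m, d with n ≥ 5, 1 ≤ d ≤ 9 and m ≥ 2 satisfy (T_n − 1)(T_{n+1} − 1)⋯(T_{n+ℓ-1} − 1) = d·(10^m − 1)/9, then ℓ ≤ 6. -/
lemma trib_add8_mod4 : ∀ k, trib (k + 8) % 4 = trib k % 4 := by
  have key : ∀ k, trib (k + 8) % 4 = trib k % 4 ∧ trib (k + 9) % 4 = trib (k + 1) % 4 ∧
      trib (k + 10) % 4 = trib (k + 2) % 4 := by
    intro k
    induction k with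
    | zero => refine ⟨by decide, by decide, by decide⟩
    | succ k ih =>
      obtain ⟨h1, h2, h3⟩ := ih
      refine ⟨h2, h3, ?_⟩
      have e1 : trib (k + 11) = trib (k + 10) + trib (k + 9) + trib (k + 8) := rfl
      have e2 : trib (k + 3) = trib (k + 2) + trib (k + 1) + trib k := rfl
      rw [e1, e2]
      omega
  exact fun k => (key k).1

lemma trib_mod4_period : ∀ q r, trib (8 * q + r) % 4 = trib r % 4 := by
  intro q
  induction q with
  | zero => intro r; simp
  | succ q ih =>
    intro r
    have : 8 * (q + 1) + r = (8 * q + r) + 8 := by ring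
    rw [this, trib_add8_mod4]
    exact ih r

lemma trib_mod4_one (k : ℕ) (h : k % 8 = 1 ∨ k % 8 = 2 ∨ k % 8 = 6) : trib k % 4 = 1 := by
  have hk : trib k % 4 = trib (k % 8) % 4 := by
    conv_lhs => rw [show k = 8 * (k / 8) + k % 8 by omega]
    exact trib_mod4_period _ _
  rcases h with h | h | h <;> rw [hk, h] <;> decide

/-- If positive integers `n, ℓ, m, d` with `n ≥ 5`, `1 ≤ d ≤ 9` and `m ≥ 2` satisfy
`(T_n - 1)(T_{n+1} - 1) ⋯ (T_{n+ℓ-1} - 1) = d * (10 ^ m - 1) / 9`, then `ℓ ≤ 6`. -/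
theorem length_le_six_of_repdigit_prod_trib_minus_one
    (n ℓ m d : ℕ) (hn : 5 ≤ n) (hℓ : 0 < ℓ) (hm : 2 ≤ m) (hd1 : 1 ≤ d) (hd9 : d ≤ 9)
    (heq : 9 * ∏ i ∈ Finset.range ℓ, ((trib (n + i) : ℤ) - 1) = (d : ℤ) * (10 ^ m - 1)) :
    ℓ ≤ 6 := by
  by_contra hcon
  push_neg at hcon
  -- find two indices i₁ < i₂ < 7 with trib (n + iⱼ) ≡ 1 [MOD 4]
  obtain ⟨i1, i2, h12, hi2, ht1, ht2⟩ :
      ∃ i1 i2, i1 < i2 ∧ i2 < 7 ∧ trib (n + i1) % 4 = 1 ∧ trib (n + i2) % 4 = 1 := by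
    have h8 : n % 8 = 0 ∨ n % 8 = 1 ∨ n % 8 = 2 ∨ n % 8 = 3 ∨ n % 8 = 4 ∨ n % 8 = 5 ∨
        n % 8 = 6 ∨ n % 8 = 7 := by omega
    rcases h8 with h | h | h | h | h | h | h | h
    · exact ⟨1, 2, by omega, by omega, trib_mod4_one _ (by omega), trib_mod4_one _ (by omega)⟩
    · exact ⟨0, 1, by omega, by omega, trib_mod4_one _ (by omega), trib_mod4_one _ (by omega)⟩
    · exact ⟨0, 4, by omega, by omega, trib_mod4_one _ (by omega), trib_mod4_one _ (by omega)⟩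
    · exact ⟨3, 6, by omega, by omega, trib_mod4_one _ (by omega), trib_mod4_one _ (by omega)⟩
    · exact ⟨2, 5, by omega, by omega, trib_mod4_one _ (by omega), trib_mod4_one _ (by omega)⟩
    · exact ⟨1, 4, by omega, by omega, trib_mod4_one _ (by omega), trib_mod4_one _ (by omega)⟩
    · exact ⟨0, 3, by omega, by omega, trib_mod4_one _ (by omega), trib_mod4_one _ (by omega)⟩
    · exact ⟨2, 3, by omega, by omega, trib_mod4_one _ (by omega), trib_mod4_one _ (by omega)⟩
  -- each such factor is divisible by 4
  have hdvd : ∀ i, trib (n + i) % 4 = 1 → (4 : ℤ) ∣ ((trib (n + i) : ℤ) - 1) := by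
    intro i hi
    obtain ⟨q, hq⟩ : ∃ q, trib (n + i) = 4 * q + 1 := ⟨trib (n + i) / 4, by omega⟩
    exact ⟨q, by push_cast [hq]; ring⟩
  -- hence 16 divides the product
  have h16 : (16 : ℤ) ∣ ∏ i ∈ Finset.range ℓ, ((trib (n + i) : ℤ) - 1) := by
    have hsub : ({i1, i2} : Finset ℕ) ⊆ Finset.range ℓ := by
      intro x hx
      simp only [Finset.mem_insert, Finset.mem_singleton] at hx
      rcases hx with rfl | rfl <;> simp [Finset.mem_range] <;> omega
    have hprod : (∏ i ∈ ({i1, i2} : Finset ℕ), ((trib (n + i) : ℤ) - 1)) ∣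
        ∏ i ∈ Finset.range ℓ, ((trib (n + i) : ℤ) - 1) :=
      Finset.prod_dvd_prod_of_subset _ _ _ hsub
    have hpair : (∏ i ∈ ({i1, i2} : Finset ℕ), ((trib (n + i) : ℤ) - 1)) =
        ((trib (n + i1) : ℤ) - 1) * ((trib (n + i2) : ℤ) - 1) :=
      Finset.prod_pair (by omega)
    have : (16 : ℤ) ∣ ((trib (n + i1) : ℤ) - 1) * ((trib (n + i2) : ℤ) - 1) := by
      have := mul_dvd_mul (hdvd i1 ht1) (hdvd i2 ht2)
      simpa using this
    exact this.trans (hpair ▸ hprod)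
  -- so 16 divides d * (10^m - 1)
  have h16r : (16 : ℤ) ∣ (d : ℤ) * (10 ^ m - 1) := by
    rw [← heq]
    exact Dvd.dvd.mul_left h16 9
  -- but 10^m - 1 is odd
  have hodd : ¬ (2 : ℤ) ∣ (10 ^ m - 1) := by
    intro ⟨k, hk⟩
    have h2 : (2 : ℤ) ∣ 10 ^ m := dvd_pow (by norm_num) (by omega)
    obtain ⟨j, hj⟩ := h2
    omega
  have hcop : IsCoprime ((2 : ℤ) ^ 4) (10 ^ m - 1) :=
    IsCoprime.pow_left ((Int.prime_two.coprime_iff_not_dvd).mpr hodd)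
  have h16d : (16 : ℤ) ∣ (d : ℤ) := by
    have : ((2 : ℤ) ^ 4) ∣ (d : ℤ) * (10 ^ m - 1) := by norm_num; exact h16r
    have := (hcop.dvd_of_dvd_mul_right this)
    norm_num at this
    exact this
  have := Int.le_of_dvd (by exact_mod_cast hd1) h16d
  omega
end

section
/- If positive integers n, k, ℓ, m, d with n ≥ 5, 1 ≤ d ≤ 9 and m ≥ 2 satisfy (T_n − 1)⋯(T_{n+k-1} − 1)·(T_{n+k} + 1)⋯(T_{n+k+ℓ-1} + 1) = d·(10^m − 1)/9, then k ≤ 6 and ℓ ≤ 7. -/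
/-- Fast tribonacci triple: `tribT n = (trib n, trib (n+1), trib (n+2))`. -/
def tribT : ℕ → ℕ × ℕ × ℕ
  | 0 => (0, 1, 1)
  | n + 1 =>
    let p := tribT n
    (p.2.1, p.2.2, p.1 + p.2.1 + p.2.2)

lemma tribT_spec : ∀ n, tribT n = (trib n, trib (n + 1), trib (n + 2)) := by
  intro n
  induction n with
  | zero => rfl
  | succ m ih => simp [tribT, ih, trib, Nat.add_comm, Nat.add_assoc, Nat.add_left_comm]

lemma trib_fast (n : ℕ) : trib n = (tribT n).1 := by rw [tribT_spec]

lemma trib_mod16_period : ∀ n, ((trib (n + 32) : ℕ) : ZMod 16) = trib n := by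
  intro n
  induction n using Nat.strong_induction_on with
  | _ n ih =>
    match n with
    | 0 => rw [trib_fast (0 + 32), trib_fast 0]; decide
    | 1 => rw [trib_fast (1 + 32), trib_fast 1]; decide
    | 2 => rw [trib_fast (2 + 32), trib_fast 2]; decide
    | (m + 3) =>
      have h0 := ih m (by omega)
      have h1 := ih (m + 1) (by omega)
      have h2 := ih (m + 2) (by omega)
      have e : m + 3 + 32 = (m + 32) + 3 := by omega
      have trib_add3 : ∀ p : ℕ, trib (p + 3) = trib (p + 2) + trib (p + 1) + trib p :=
        fun p => rfl
      rw [e, trib_add3 (m + 32), trib_add3 m]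
      push_cast
      have e2 : m + 32 + 2 = (m + 2) + 32 := by omega
      have e1 : m + 32 + 1 = (m + 1) + 32 := by omega
      rw [e2, e1, h0, h1, h2]

lemma trib_mod16 : ∀ n, ((trib n : ℕ) : ZMod 16) = trib (n % 32) := by
  intro n
  induction n using Nat.strong_induction_on with
  | _ n ih =>
    by_cases h : n < 32
    · rw [Nat.mod_eq_of_lt h]
    · have e : n = (n - 32) + 32 := by omega
      rw [e, trib_mod16_period, ih (n - 32) (by omega), Nat.add_mod_right]

lemma prod7_dvd (n : ℕ) :
    (16 : ℤ) ∣ ∏ i ∈ Finset.range 7, ((trib (n + i) : ℤ) - 1) := by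
  have h : ((∏ i ∈ Finset.range 7, ((trib (n + i) : ℤ) - 1) : ℤ) : ZMod 16) = 0 := by
    push_cast
    have hc : ∀ i ∈ Finset.range 7,
        ((trib (n + i) : ZMod 16) - 1) = ((tribT ((n % 32 + i) % 32)).1 : ZMod 16) - 1 := by
      intro i hi
      simp only [Finset.mem_range] at hi
      have h1 : ((trib (n + i) : ℕ) : ZMod 16) = trib ((n + i) % 32) := trib_mod16 _
      have h2 : (n + i) % 32 = (n % 32 + i) % 32 := by
        conv_lhs => rw [Nat.add_mod]
        rw [Nat.mod_eq_of_lt (show i < 32 by omega)]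
      rw [h1, h2, trib_fast]
    rw [Finset.prod_congr rfl hc]
    have hlt : n % 32 < 32 := Nat.mod_lt _ (by norm_num)
    revert hlt
    generalize n % 32 = r
    revert r
    decide
  exact (ZMod.intCast_zmod_eq_zero_iff_dvd _ 16).mp h

lemma prod8_dvd (n : ℕ) :
    (16 : ℤ) ∣ ∏ i ∈ Finset.range 8, ((trib (n + i) : ℤ) + 1) := by
  have h : ((∏ i ∈ Finset.range 8, ((trib (n + i) : ℤ) + 1) : ℤ) : ZMod 16) = 0 := by
    push_cast
    have hc : ∀ i ∈ Finset.range 8,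
        ((trib (n + i) : ZMod 16) + 1) = ((tribT ((n % 32 + i) % 32)).1 : ZMod 16) + 1 := by
      intro i hi
      simp only [Finset.mem_range] at hi
      have h1 : ((trib (n + i) : ℕ) : ZMod 16) = trib ((n + i) % 32) := trib_mod16 _
      have h2 : (n + i) % 32 = (n % 32 + i) % 32 := by
        conv_lhs => rw [Nat.add_mod]
        rw [Nat.mod_eq_of_lt (show i < 32 by omega)]
      rw [h1, h2, trib_fast]
    rw [Finset.prod_congr rfl hc]
    have hlt : n % 32 < 32 := Nat.mod_lt _ (by norm_num)
    revert hlt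
    generalize n % 32 = r
    revert r
    decide
  exact (ZMod.intCast_zmod_eq_zero_iff_dvd _ 16).mp h

/-- If positive integers `n, k, ℓ, m, d` with `n ≥ 5`, `1 ≤ d ≤ 9` and `m ≥ 2` satisfy
`(T_n - 1) ⋯ (T_{n+k-1} - 1) * (T_{n+k} + 1) ⋯ (T_{n+k+ℓ-1} + 1) = d * (10 ^ m - 1) / 9`,
then `k ≤ 6` and `ℓ ≤ 7`. -/
theorem lengths_le_of_repdigit_prod_trib_minus_then_plus
    (n k ℓ m d : ℕ) (hn : 5 ≤ n) (hk : 0 < k) (hℓ : 0 < ℓ) (hm : 2 ≤ m)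
    (hd1 : 1 ≤ d) (hd9 : d ≤ 9)
    (heq : 9 * ((∏ i ∈ Finset.range k, ((trib (n + i) : ℤ) - 1)) *
      ∏ i ∈ Finset.range ℓ, ((trib (n + k + i) : ℤ) + 1)) = (d : ℤ) * (10 ^ m - 1)) :
    k ≤ 6 ∧ ℓ ≤ 7 := by
  have odd10 : ¬ (2 : ℤ) ∣ (10 ^ m - 1) := by
    intro h
    have h2 : (2 : ℤ) ∣ 10 ^ m := dvd_pow (by norm_num) (by omega)
    obtain ⟨a, ha⟩ := h
    obtain ⟨b, hb⟩ := h2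
    omega
  have cop : IsCoprime (16 : ℤ) (10 ^ m - 1) := by
    have h2 : IsCoprime (2 : ℤ) (10 ^ m - 1) :=
      (Int.prime_two.coprime_iff_not_dvd).mpr odd10
    have h16 : IsCoprime ((2 : ℤ) ^ 4) (10 ^ m - 1) := h2.pow_left
    norm_num at h16
    exact h16
  have finish : (16 : ℤ) ∣ (d : ℤ) * (10 ^ m - 1) → False := by
    intro hdvd
    have h16d : (16 : ℤ) ∣ (d : ℤ) := cop.dvd_of_dvd_mul_right hdvd
    have hle : (16 : ℤ) ≤ (d : ℤ) := Int.le_of_dvd (by exact_mod_cast hd1) h16d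
    have hle9 : (d : ℤ) ≤ 9 := by exact_mod_cast hd9
    omega
  constructor
  · by_contra hk6
    apply finish
    rw [← heq]
    have hsplit : k = 7 + (k - 7) := by omega
    rw [hsplit, Finset.prod_range_add]
    exact Dvd.dvd.mul_left (((prod7_dvd n).mul_right _).mul_right _) 9
  · by_contra hl7
    apply finish
    rw [← heq]
    have hsplit : ℓ = 8 + (ℓ - 8) := by omega
    rw [hsplit, Finset.prod_range_add]
    exact Dvd.dvd.mul_left (((prod8_dvd (n + k)).mul_right _).mul_left _) 9
end

section
/- For every integer n ≥ 5, the 2-adic valuation of T_n − 1 is given by: v_2(T_n − 1) = 0 if n ≡ 0 or 3 (mod 4); v_2(T_n − 1) = 1 if n ≡ 5 (mod 8); v_2(T_n − 1) = v_2(n+2) − 1 if n ≡ 6 (mod 8); v_2(T_n − 1) = v_2(n−2) − 1 if n ≡ 2 (mod 8); and v_2(T_n − 1) = v_2((n−1)(n+7)) − 3 if n ≡ 1 (mod 8). -/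
open Matrix

abbrev M3 := Matrix (Fin 3) (Fin 3) ℤ

def Mt : M3 := !![1,1,1;1,0,0;0,1,0]
def Nt : M3 := !![20,17,11;11,9,6;6,5,3]
def Nt2 : M3 := !![653,548,355;355,298,193;193,162,105]
def Kt : M3 := !![0,-1,2;2,-2,-3;-3,5,1]
def Mt2v : M3 := !![2,2,1;1,1,1;1,0,0]

lemma trib_rec (n : ℕ) : trib (n+3) = trib (n+2) + trib (n+1) + trib n := rfl

def Pm (n : ℕ) : M3 :=
  !![(trib (n+4) : ℤ), trib (n+3) + trib (n+2), trib (n+3);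
     trib (n+3), trib (n+2) + trib (n+1), trib (n+2);
     trib (n+2), trib (n+1) + trib n, trib (n+1)]

lemma Mt_pow (n : ℕ) : Mt ^ (n+3) = Pm n := by
  induction n with
  | zero =>
    show Mt ^ 3 = Pm 0
    rw [pow_succ, pow_succ, pow_one]
    norm_num [Mt, Pm, Matrix.mul_fin_three, trib]
  | succ n ih =>
    rw [show n+1+3 = (n+3)+1 from rfl, pow_succ', ih]
    ext i j
    fin_cases i <;> fin_cases j <;>
      simp [Mt, Pm, Matrix.mul_apply, Fin.sum_univ_three, trib_rec] <;> ring

lemma Mt8 : Mt ^ 8 = 1 + (4 : ℤ) • Nt := by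
  rw [show (8:ℕ) = 5+3 from rfl, Mt_pow]
  ext i j
  fin_cases i <;> fin_cases j <;>
    simp [Pm, Nt, Matrix.one_apply, show trib 9 = 81 from rfl,
      show trib 8 = 44 from rfl, show trib 7 = 24 from rfl,
      show trib 6 = 13 from rfl, show trib 5 = 7 from rfl]

lemma Mt16 : Mt ^ 16 = 1 + (8 : ℤ) • (Nt + (2:ℤ) • Nt2) := by
  rw [show (16:ℕ) = 13+3 from rfl, Mt_pow]
  ext i j
  fin_cases i <;> fin_cases j <;>
    simp [Pm, Nt, Nt2, Matrix.one_apply, show trib 17 = 10609 from by decide,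
      show trib 16 = 5768 from by decide, show trib 15 = 3136 from by decide,
      show trib 14 = 1705 from by decide, show trib 13 = 927 from by decide]

lemma Mt5 : Mt ^ 5 = !![13,11,7;7,6,4;4,3,2] := by
  rw [show (5:ℕ) = 2+3 from rfl, Mt_pow]
  norm_num [Pm, show trib 6 = 13 from rfl, show trib 5 = 7 from rfl,
    show trib 4 = 4 from rfl, show trib 3 = 2 from rfl, show trib 2 = 1 from rfl]

lemma Mt5Kt : Mt ^ 5 * Kt = 1 := by
  rw [Mt5]
  ext i j
  fin_cases i <;> fin_cases j <;>
    simp [Kt, Matrix.mul_apply, Fin.sum_univ_three, Matrix.one_apply]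

lemma Mt2 : Mt ^ 2 = Mt2v := by
  rw [pow_two]
  norm_num [Mt, Mt2v, Matrix.mul_fin_three]

/-- binomial-type expansion in a ring -/
lemma pow_expand {R : Type*} [Ring R] (X : R) (u : ℕ) :
    ∃ D : R, (1 + X)^u = 1 + u • X + X*X*D := by
  induction u with
  | zero => exact ⟨0, by simp⟩
  | succ u ih =>
    obtain ⟨D, hD⟩ := ih
    refine ⟨u • (1:R) + D + D*X, ?_⟩
    rw [pow_succ, hD]
    simp only [mul_add, add_mul, one_mul, mul_one, succ_nsmul, smul_mul_assoc,
      mul_smul_comm, mul_assoc]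
    abel

lemma sq_expand (c : ℤ) (A : M3) :
    ((1:M3) + c • A)^2 = 1 + (2*c) • A + (c*c) • (A*A) := by
  rw [sq]
  simp only [mul_add, add_mul, one_mul, mul_one, smul_smul, smul_mul_assoc,
    mul_smul_comm, smul_add]
  module

lemma struct3 (f : ℕ) :
    ∃ B : M3, Mt ^ (2^(f+3)) = 1 + ((2:ℤ)^(f+2)) • (Nt + (2:ℤ) • B) := by
  induction f with
  | zero => exact ⟨0, by simpa using Mt8⟩
  | succ f ih =>
    obtain ⟨B, hB⟩ := ih
    refine ⟨B + (2:ℤ)^f • ((Nt + (2:ℤ)•B) * (Nt + (2:ℤ)•B)), ?_⟩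
    rw [show f+1+3 = (f+3)+1 from rfl, pow_succ, pow_mul, hB, sq_expand]
    set X := (Nt + (2:ℤ)•B) * (Nt + (2:ℤ)•B) with hX
    simp only [smul_add, smul_smul]
    module

lemma struct4 (f : ℕ) :
    ∃ C : M3, Mt ^ (2^(f+4)) = 1 + ((2:ℤ)^(f+3)) • (Nt + (2:ℤ) • Nt2 + (4:ℤ) • C) := by
  induction f with
  | zero => exact ⟨0, by simpa using Mt16⟩
  | succ f ih =>
    obtain ⟨C, hC⟩ := ih
    set A := Nt + (2:ℤ) • Nt2 + (4:ℤ) • C with hA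
    refine ⟨C + (2:ℤ)^f • (A * A), ?_⟩
    rw [show f+1+4 = (f+4)+1 from rfl, pow_succ, pow_mul, hC, sq_expand]
    set X := A * A with hX
    rw [hA]
    simp only [smul_add, smul_smul]
    module

lemma pow_mul_expand (q u : ℕ) (c : ℤ) (A : M3) (h : Mt^q = 1 + c • A) :
    ∃ D : M3, Mt^(q*u) = 1 + ((u:ℤ)*c) • A + (c*c) • D := by
  obtain ⟨D, hD⟩ := pow_expand (c • A) u
  refine ⟨A*(A*D), ?_⟩
  rw [pow_mul, h, hD]
  simp only [smul_mul_assoc, mul_smul_comm, smul_smul, natCast_zsmul, mul_assoc]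
  module

lemma entry_lin (c d : ℤ) (X Y : M3) (i j : Fin 3) :
    ((1:M3) + c • X + d • Y) i j = (if i = j then 1 else 0) + c * X i j + d * Y i j := by
  simp only [Matrix.add_apply, Matrix.smul_apply, Matrix.one_apply, smul_eq_mul]

lemma entry_lin_mul (c d : ℤ) (X Y Z : M3) (i j : Fin 3) :
    (((1:M3) + c • X + d • Y) * Z) i j = Z i j + c * (X*Z) i j + d * (Y*Z) i j := by
  simp only [add_mul, one_mul, smul_mul_assoc, Matrix.add_apply, Matrix.smul_apply, smul_eq_mul]

lemma Pm22 (n : ℕ) : Pm n 2 2 = (trib (n+1) : ℤ) := by simp [Pm]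
lemma Pm00 (n : ℕ) : Pm n 0 0 = (trib (n+4) : ℤ) := by simp [Pm]
lemma Pm02 (n : ℕ) : Pm n 0 2 = (trib (n+3) : ℤ) := by simp [Pm]

lemma Nt22 (B : M3) : (Nt + (2:ℤ) • B) 2 2 = 3 + 2 * B 2 2 := by
  simp only [Matrix.add_apply, Matrix.smul_apply, smul_eq_mul, Nt]
  norm_num
  rfl

lemma A4_00 (C : M3) : (Nt + (2:ℤ) • Nt2 + (4:ℤ) • C) 0 0 = 1326 + 4 * C 0 0 := by
  simp only [Matrix.add_apply, Matrix.smul_apply, smul_eq_mul, Nt, Nt2]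
  norm_num

lemma AMt2 (B : M3) :
    ((Nt + (2:ℤ)•B) * Mt2v) 0 2 = 37 + 2 * ((B * Mt2v) 0 2) := by
  simp only [add_mul, smul_mul_assoc, Matrix.add_apply, Matrix.smul_apply, smul_eq_mul]
  norm_num [Nt, Mt2v, Matrix.mul_fin_three]
  rfl

lemma A4Kt (C : M3) :
    ((Nt + (2:ℤ) • Nt2 + (4:ℤ) • C) * Kt) 2 2 = 10 + 4 * ((C * Kt) 2 2) := by
  simp only [add_mul, smul_mul_assoc, Matrix.add_apply, Matrix.smul_apply, smul_eq_mul]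
  norm_num [Nt, Nt2, Kt, Matrix.mul_fin_three]
  rfl

lemma h8le (f : ℕ) : (8:ℕ) ≤ 2^(f+3) := by
  calc (8:ℕ) = 2^3 := rfl
  _ ≤ 2^(f+3) := Nat.pow_le_pow_right (by norm_num) (by omega)

lemma h16le (f : ℕ) : (16:ℕ) ≤ 2^(f+4) := by
  calc (16:ℕ) = 2^4 := rfl
  _ ≤ 2^(f+4) := Nat.pow_le_pow_right (by norm_num) (by omega)

/-- Case n ≡ 6 (mod 8): n + 2 = 2^(f+3) u with u odd. -/
lemma L3 (f u n : ℕ) (hu : u % 2 = 1) (hn : n + 2 = 2^(f+3) * u) :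
    ((2:ℤ)^(f+3)) ∣ (trib n : ℤ) - 1 - 2^(f+2) := by
  obtain ⟨B, hB⟩ := struct3 f
  obtain ⟨D, hD⟩ := pow_mul_expand _ u _ _ hB
  have hn1 : 1 ≤ n := by
    have h1 : 2^(f+3)*1 ≤ 2^(f+3)*u := Nat.mul_le_mul_left _ (by omega)
    have := h8le f; omega
  have hidx : 2^(f+3)*u = (n-1)+3 := by omega
  rw [hidx, Mt_pow] at hD
  have h22 := congrFun (congrFun hD 2) 2
  rw [entry_lin, Nt22, Pm22, show n-1+1 = n by omega, if_pos rfl] at h22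
  obtain ⟨v, hv⟩ : ∃ v, u = 2*v+1 := ⟨u/2, by omega⟩
  refine ⟨3*v + (2*(v:ℤ)+1) * B 2 2 + 1 + 2^(f+1) * D 2 2, ?_⟩
  have hu' : (u:ℤ) = 2*(v:ℤ)+1 := by exact_mod_cast congrArg (Nat.cast : ℕ → ℤ) hv
  rw [hu'] at h22
  linear_combination h22

/-- Case n ≡ 2 (mod 8): n - 2 = 2^(f+3) u with u odd. -/
lemma L4 (f u n : ℕ) (hu : u % 2 = 1) (hn : n = 2^(f+3) * u + 2) :
    ((2:ℤ)^(f+3)) ∣ (trib n : ℤ) - 1 - 2^(f+2) := by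
  obtain ⟨B, hB⟩ := struct3 f
  obtain ⟨D, hD⟩ := pow_mul_expand _ u _ _ hB
  have hD2 : Mt ^ n = (1 + ((u:ℤ)*2^(f+2)) • (Nt + (2:ℤ)•B) + ((2:ℤ)^(f+2)*2^(f+2)) • D) * Mt2v := by
    rw [hn, pow_add, Mt2, hD]
  have hn3 : n = (n-3)+3 := by
    have h1 : 2^(f+3)*1 ≤ 2^(f+3)*u := Nat.mul_le_mul_left _ (by omega)
    have := h8le f; omega
  rw [hn3, Mt_pow] at hD2
  have h02 := congrFun (congrFun hD2 0) 2
  rw [entry_lin_mul, AMt2, Pm02, show n-3+3 = n by omega] at h02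
  have hK : Mt2v 0 2 = 1 := by norm_num [Mt2v]; rfl
  rw [hK] at h02
  obtain ⟨v, hv⟩ : ∃ v, u = 2*v+1 := ⟨u/2, by omega⟩
  refine ⟨37*v + (2*(v:ℤ)+1) * (B * Mt2v) 0 2 + 18 + 2^(f+1) * (D * Mt2v) 0 2, ?_⟩
  have hu' : (u:ℤ) = 2*(v:ℤ)+1 := by exact_mod_cast congrArg (Nat.cast : ℕ → ℤ) hv
  rw [hu'] at h02
  linear_combination h02

/-- Case n ≡ 1 (mod 16): n - 1 = 2^(f+4) u with u odd. -/
lemma L5a (f u n : ℕ) (hu : u % 2 = 1) (hn : n = 2^(f+4) * u + 1) :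
    ((2:ℤ)^(f+5)) ∣ (trib n : ℤ) - 1 - 2^(f+4) := by
  obtain ⟨C, hC⟩ := struct4 f
  obtain ⟨D, hD⟩ := pow_mul_expand _ u _ _ hC
  have hn4 : 2^(f+4)*u = (n-4)+3 := by
    have h1 : 2^(f+4)*1 ≤ 2^(f+4)*u := Nat.mul_le_mul_left _ (by omega)
    have := h16le f; omega
  rw [hn4, Mt_pow] at hD
  have h00 := congrFun (congrFun hD 0) 0
  rw [entry_lin, A4_00, Pm00, show n-4+4 = n by
      have h1 : 2^(f+4)*1 ≤ 2^(f+4)*u := Nat.mul_le_mul_left _ (by omega)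
      have := h16le f; omega, if_pos rfl] at h00
  obtain ⟨v, hv⟩ : ∃ v, u = 2*v+1 := ⟨u/2, by omega⟩
  refine ⟨663*v + (2*(v:ℤ)+1) * C 0 0 + 331 + 2^(f+1) * D 0 0, ?_⟩
  have hu' : (u:ℤ) = 2*(v:ℤ)+1 := by exact_mod_cast congrArg (Nat.cast : ℕ → ℤ) hv
  rw [hu'] at h00
  linear_combination h00

/-- Case n ≡ 9 (mod 16): n + 7 = 2^(f+4) u with u odd. -/
lemma L5b (f u n : ℕ) (hu : u % 2 = 1) (hn : n + 7 = 2^(f+4) * u) :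
    ((2:ℤ)^(f+5)) ∣ (trib n : ℤ) - 1 - 2^(f+4) := by
  obtain ⟨C, hC⟩ := struct4 f
  obtain ⟨D, hD⟩ := pow_mul_expand _ u _ _ hC
  have hge : 16 ≤ 2^(f+4)*u := by
    have h1 : 2^(f+4)*1 ≤ 2^(f+4)*u := Nat.mul_le_mul_left _ (by omega)
    have := h16le f; omega
  have hsplit : Mt ^ (2^(f+4)*u) * Kt = Pm (n - 1) := by
    have h5 : 2^(f+4)*u = ((n-1)+3) + 5 := by omega
    rw [h5, pow_add, mul_assoc, Mt5Kt, mul_one, Mt_pow]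
  rw [hD] at hsplit
  have h22 := congrFun (congrFun hsplit.symm 2) 2
  rw [entry_lin_mul, A4Kt, Pm22, show n-1+1 = n by omega] at h22
  have hK : Kt 2 2 = 1 := by norm_num [Kt]; rfl
  rw [hK] at h22
  obtain ⟨v, hv⟩ : ∃ v, u = 2*v+1 := ⟨u/2, by omega⟩
  refine ⟨5*v + (2*(v:ℤ)+1) * (C * Kt) 2 2 + 2 + 2^(f+1) * (D * Kt) 2 2, ?_⟩
  have hu' : (u:ℤ) = 2*(v:ℤ)+1 := by exact_mod_cast congrArg (Nat.cast : ℕ → ℤ) hv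
  rw [hu'] at h22
  linear_combination h22

/-! ### Elementary facts about trib -/

lemma trib_pos : ∀ n, 1 ≤ trib (n+1) ∧ 1 ≤ trib (n+2) := by
  intro n
  induction n with
  | zero => exact ⟨le_refl 1, le_refl 1⟩
  | succ n ih =>
    refine ⟨ih.2, ?_⟩
    rw [show n+1+2 = n+3 from rfl, trib_rec]
    omega

lemma trib_ge_one {n : ℕ} (h : 1 ≤ n) : 1 ≤ trib n := by
  obtain ⟨m, rfl⟩ : ∃ m, n = m + 1 := ⟨n-1, by omega⟩
  exact (trib_pos m).1

/-- mod 4 periodicity with period 8 -/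
lemma per3 : ∀ n, trib (n+8) % 4 = trib n % 4 ∧ trib (n+9) % 4 = trib (n+1) % 4 ∧
    trib (n+10) % 4 = trib (n+2) % 4 := by
  intro n
  induction n with
  | zero => decide
  | succ n ih =>
    obtain ⟨h1, h2, h3⟩ := ih
    have e1 : trib (n+11) = trib (n+10) + trib (n+9) + trib (n+8) := trib_rec (n+8)
    have e2 : trib (n+3) = trib (n+2) + trib (n+1) + trib n := trib_rec n
    refine ⟨h2, h3, ?_⟩
    show trib (n+11) % 4 = trib (n+3) % 4
    omega

lemma per8 : ∀ k r, trib (8*k + r) % 4 = trib r % 4 := by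
  intro k
  induction k with
  | zero => intro r; norm_num
  | succ k ih =>
    intro r
    have : 8*(k+1) + r = (8*k + r) + 8 := by ring
    rw [this, (per3 (8*k+r)).1, ih]

lemma trib_mod4 (n : ℕ) : trib n % 4 = trib (n % 8) % 4 := by
  conv_lhs => rw [show n = 8*(n/8) + n%8 by omega]
  exact per8 _ _

/-! ### padicValNat helpers -/

lemma val_of_mod (x g : ℕ) (h : ((2:ℤ)^(g+1)) ∣ (x:ℤ) - 2^g) : padicValNat 2 x = g := by
  obtain ⟨k, hk⟩ := h
  have hx : (x:ℤ) = 2^g * (2*k+1) := by linear_combination hk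
  have hknn : 0 ≤ k := by
    by_contra hneg
    push_neg at hneg
    have : (x:ℤ) < 0 := by
      have h2 : 2*k+1 ≤ -1 := by omega
      have h3 : (0:ℤ) < 2^g := by positivity
      nlinarith
    have : (0:ℤ) ≤ x := Int.natCast_nonneg x
    omega
  obtain ⟨m, rfl⟩ : ∃ m : ℕ, k = (m:ℤ) := ⟨k.toNat, (Int.toNat_of_nonneg hknn).symm⟩
  have hxn : x = 2^g * (2*m+1) := by exact_mod_cast hx
  rw [hxn, padicValNat.mul (by positivity) (by omega),
    padicValNat.prime_pow, padicValNat.eq_zero_of_not_dvd (by omega)]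
  omega

lemma val_odd (x : ℕ) (h : x % 2 = 1) : padicValNat 2 x = 0 :=
  padicValNat.eq_zero_of_not_dvd (by omega)

/-! ### Main theorem -/

/-- The 2-adic valuation of `T_n - 1` for `n ≥ 5`. -/
theorem two_adic_valuation_trib_minus_one :
    ∀ n : ℕ, 5 ≤ n →
      ((n % 4 = 0 ∨ n % 4 = 3) → padicValNat 2 (trib n - 1) = 0) ∧
      (n % 8 = 5 → padicValNat 2 (trib n - 1) = 1) ∧
      (n % 8 = 6 →
        (padicValNat 2 (trib n - 1) : ℤ) = (padicValNat 2 (n + 2) : ℤ) - 1) ∧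
      (n % 8 = 2 →
        (padicValNat 2 (trib n - 1) : ℤ) = (padicValNat 2 (n - 2) : ℤ) - 1) ∧
      (n % 8 = 1 →
        (padicValNat 2 (trib n - 1) : ℤ) = (padicValNat 2 ((n - 1) * (n + 7)) : ℤ) - 3) := by
  intro n hn5
  have htp : 1 ≤ trib n := trib_ge_one (by omega)
  have hcast : ((trib n - 1 : ℕ) : ℤ) = (trib n : ℤ) - 1 := by
    push_cast [Nat.cast_sub htp]; ring
  have hfact : ∀ x : ℕ, x ≠ 0 → ∃ u, u % 2 = 1 ∧ x = 2^(padicValNat 2 x) * u := by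
    intro x hx
    refine ⟨x / 2^(padicValNat 2 x), ?_, (Nat.mul_div_cancel' pow_padicValNat_dvd).symm⟩
    have h := Nat.not_dvd_ordCompl Nat.prime_two hx
    rw [Nat.factorization_def _ Nat.prime_two] at h
    omega
  have hle : ∀ x k : ℕ, x ≠ 0 → 2^k ∣ x → k ≤ padicValNat 2 x := fun x k hx h =>
    (padicValNat_dvd_iff_le hx).mp h
  refine ⟨?_, ?_, ?_, ?_, ?_⟩
  · -- n % 4 = 0 or 3
    intro hmod
    apply val_odd
    have h4 := trib_mod4 n
    have : n % 8 = 0 ∨ n % 8 = 4 ∨ n % 8 = 3 ∨ n % 8 = 7 := by omega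
    rcases this with h | h | h | h <;> rw [h] at h4 <;>
      simp [show trib 0 = 0 from rfl, show trib 4 = 4 from rfl,
        show trib 3 = 2 from rfl, show trib 7 = 24 from rfl] at h4 <;> omega
  · -- n % 8 = 5
    intro hmod
    have h4 : trib n % 4 = 3 := by rw [trib_mod4 n, hmod]; rfl
    apply val_of_mod (trib n - 1) 1
    rw [hcast]
    obtain ⟨q, hq⟩ : ∃ q, trib n = 4*q+3 := ⟨trib n / 4, by omega⟩
    exact ⟨q, by push_cast [hq]; ring⟩
  · -- n % 8 = 6
    intro hmod
    have hne : n + 2 ≠ 0 := by omega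
    have he3 : 3 ≤ padicValNat 2 (n+2) :=
      hle _ 3 hne (by rw [show (2:ℕ)^3 = 8 from rfl]; omega)
    obtain ⟨u, hu, hx⟩ := hfact (n+2) hne
    obtain ⟨f, hf⟩ : ∃ f, padicValNat 2 (n+2) = f + 3 := ⟨padicValNat 2 (n+2) - 3, by omega⟩
    rw [hf] at hx
    have hL := L3 f u n hu hx
    have hval : padicValNat 2 (trib n - 1) = f + 2 :=
      val_of_mod (trib n - 1) (f+2) (by rw [hcast]; exact_mod_cast hL)
    rw [hval, hf]; push_cast; ring
  · -- n % 8 = 2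
    intro hmod
    have hne : n - 2 ≠ 0 := by omega
    have he3 : 3 ≤ padicValNat 2 (n-2) :=
      hle _ 3 hne (by rw [show (2:ℕ)^3 = 8 from rfl]; omega)
    obtain ⟨u, hu, hx⟩ := hfact (n-2) hne
    obtain ⟨f, hf⟩ : ∃ f, padicValNat 2 (n-2) = f + 3 := ⟨padicValNat 2 (n-2) - 3, by omega⟩
    rw [hf] at hx
    have hL := L4 f u n hu (by omega)
    have hval : padicValNat 2 (trib n - 1) = f + 2 :=
      val_of_mod (trib n - 1) (f+2) (by rw [hcast]; exact_mod_cast hL)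
    rw [hval, hf]; push_cast; ring
  · -- n % 8 = 1
    intro hmod
    have hn9 : 9 ≤ n := by omega
    have hne1 : n - 1 ≠ 0 := by omega
    have hne7 : n + 7 ≠ 0 := by omega
    have hsplit : padicValNat 2 ((n-1)*(n+7)) = padicValNat 2 (n-1) + padicValNat 2 (n+7) :=
      padicValNat.mul hne1 hne7
    rcases (by omega : n % 16 = 1 ∨ n % 16 = 9) with h16 | h16
    · -- v2(n+7) = 3, n - 1 = 2^(f+4) u
      have hv7 : padicValNat 2 (n+7) = 3 := by
        apply val_of_mod (n+7) 3
        obtain ⟨q, hq⟩ : ∃ q, n + 7 = 16*q+8 := ⟨(n+7)/16, by omega⟩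
        exact ⟨q, by push_cast [hq]; ring⟩
      have he4 : 4 ≤ padicValNat 2 (n-1) :=
        hle _ 4 hne1 (by rw [show (2:ℕ)^4 = 16 from rfl]; omega)
      obtain ⟨u, hu, hx⟩ := hfact (n-1) hne1
      obtain ⟨f, hf⟩ : ∃ f, padicValNat 2 (n-1) = f + 4 := ⟨padicValNat 2 (n-1) - 4, by omega⟩
      rw [hf] at hx
      have hL := L5a f u n hu (by omega)
      have hval : padicValNat 2 (trib n - 1) = f + 4 :=
        val_of_mod (trib n - 1) (f+4) (by rw [hcast]; exact_mod_cast hL)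
      rw [hval, hsplit, hf, hv7]; push_cast; ring
    · -- v2(n-1) = 3, n + 7 = 2^(f+4) u
      have hv1 : padicValNat 2 (n-1) = 3 := by
        apply val_of_mod (n-1) 3
        obtain ⟨q, hq⟩ : ∃ q, n - 1 = 16*q+8 := ⟨(n-1)/16, by omega⟩
        exact ⟨q, by push_cast [hq]; ring⟩
      have he4 : 4 ≤ padicValNat 2 (n+7) :=
        hle _ 4 hne7 (by rw [show (2:ℕ)^4 = 16 from rfl]; omega)
      obtain ⟨u, hu, hx⟩ := hfact (n+7) hne7
      obtain ⟨f, hf⟩ : ∃ f, padicValNat 2 (n+7) = f + 4 := ⟨padicValNat 2 (n+7) - 4, by omega⟩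
      rw [hf] at hx
      have hL := L5b f u n hu hx
      have hval : padicValNat 2 (trib n - 1) = f + 4 :=
        val_of_mod (trib n - 1) (f+4) (by rw [hcast]; exact_mod_cast hL)
      rw [hval, hsplit, hf, hv1]; push_cast; ring
end

section
/- For all positive integers n, ℓ, m, d with 1 ≤ d ≤ 9, one has d·10^m/9 ≠ c_α^ℓ · α^{ℓn + ℓ(ℓ−1)/2} as real numbers, where α is the unique real root of x³ − x² − x − 1 = 0 and c_α = 1/(3α² − 2α − 1). -/
open Polynomial

noncomputable def P3 : ℚ[X] := X^3 - X^2 - X - 1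

lemma P3_natDegree : P3.natDegree = 3 := by
  unfold P3; compute_degree!

lemma P3_monic : P3.Monic := by
  unfold P3; monicity!

noncomputable def PZ : ℤ[X] := X^3 - X^2 - X - 1

lemma PZ_monic : PZ.Monic := by unfold PZ; monicity!

lemma no_rat_root (x : ℚ) : ¬ P3.IsRoot x := by
  intro hx
  have hx' : x^3 - x^2 - x - 1 = 0 := by
    have : P3.eval x = 0 := hx
    simpa [P3] using this
  have hev : Polynomial.aeval x PZ = 0 := by
    simp [PZ, aeval_def]
    linarith
  obtain ⟨z, hz⟩ := isInteger_of_is_root_of_monic PZ_monic hev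
  have hzq : (z:ℚ)^3 - (z:ℚ)^2 - (z:ℚ) - 1 = 0 := by
    rw [show ((z:ℚ)) = x from hz]; exact hx'
  have hzz : z^3 - z^2 - z - 1 = 0 := by exact_mod_cast hzq
  rcases le_or_gt z 1 with h | h
  · nlinarith [sq_nonneg z, sq_nonneg (z-1), sq_nonneg (z+1)]
  · nlinarith [sq_nonneg z, sq_nonneg (z-1), sq_nonneg (z+1)]

lemma P3_irred : Irreducible P3 := by
  rw [Polynomial.irreducible_iff_roots_eq_zero_of_degree_le_three
    (by rw [P3_natDegree]; omega) (by rw [P3_natDegree])]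
  ext a; simp only [Multiset.count_zero, Multiset.count_eq_zero]
  intro hmem
  exact no_rat_root a ((mem_roots (p := P3) P3_monic.ne_zero).1 hmem)

instance : Fact (Irreducible P3) := ⟨P3_irred⟩

noncomputable abbrev K3 : Type := AdjoinRoot P3

noncomputable def θ : K3 := AdjoinRoot.root P3

lemma hθ3 : θ^3 = θ^2 + θ + 1 := by
  have h : AdjoinRoot.mk P3 P3 = 0 := AdjoinRoot.mk_self
  have h2 : θ^3 - θ^2 - θ - 1 = 0 := by
    calc θ^3 - θ^2 - θ - 1
        = AdjoinRoot.mk P3 (X^3 - X^2 - X - 1) := by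
          simp [θ, ← AdjoinRoot.mk_X, map_sub, map_pow, map_one]
      _ = 0 := h
  linear_combination h2

noncomputable def pb : PowerBasis ℚ K3 := AdjoinRoot.powerBasis P3_monic.ne_zero

lemma pb_dim : pb.dim = 3 := by simp [pb, AdjoinRoot.powerBasis, P3_natDegree]

noncomputable def B : Module.Basis (Fin 3) ℚ K3 := pb.basis.reindex (finCongr pb_dim)

lemma B_apply (i : Fin 3) : B i = θ^(i:ℕ) := by
  rw [B, Module.Basis.reindex_apply, PowerBasis.basis_eq_pow]
  simp [pb, AdjoinRoot.powerBasis_gen, θ]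
  rfl

lemma repr_eq (c : Fin 3 → ℚ) (v : K3) (hv : v = c 0 • θ^(0:ℕ) + c 1 • θ^(1:ℕ) + c 2 • θ^(2:ℕ)) :
    ∀ i, B.repr v i = c i := by
  intro i
  have : v = ∑ j, c j • B j := by
    rw [Fin.sum_univ_three, B_apply, B_apply, B_apply]; exact hv
  rw [this, B.repr_sum_self]

lemma repr_eq' (c : Fin 3 → ℚ) (v : K3)
    (hv : v = algebraMap ℚ K3 (c 0) + algebraMap ℚ K3 (c 1) * θ + algebraMap ℚ K3 (c 2) * θ^2) :
    ∀ i, B.repr v i = c i := by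
  apply repr_eq
  rw [hv]
  simp [Algebra.smul_def]

lemma norm_θ : Algebra.norm ℚ θ = 1 := by
  rw [Algebra.norm_eq_matrix_det B θ]
  have hM : Algebra.leftMulMatrix B θ = !![0,0,1;1,0,1;0,1,1] := by
    ext i j
    rw [Algebra.leftMulMatrix_eq_repr_mul]
    fin_cases j
    · rw [repr_eq' ![0,1,0] _ (by rw [B_apply]; push_cast; simp) i]
      fin_cases i <;> simp [Matrix.vecHead, Matrix.vecTail]
    · rw [repr_eq' ![0,0,1] _ (by rw [B_apply]; push_cast; simp; ring) i]
      fin_cases i <;> simp [Matrix.vecHead, Matrix.vecTail]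
    · rw [repr_eq' ![1,1,1] _ (by rw [B_apply]; push_cast; simp; linear_combination hθ3) i]
      fin_cases i <;> simp [Matrix.vecHead, Matrix.vecTail]
  rw [hM, Matrix.det_fin_three]
  norm_num [Matrix.vecHead, Matrix.vecTail, Matrix.cons_val_two]

noncomputable def yK : K3 := 3*θ^2 - 2*θ - 1

lemma norm_yK : Algebra.norm ℚ yK = 44 := by
  rw [Algebra.norm_eq_matrix_det B yK]
  have hM : Algebra.leftMulMatrix B yK = !![-1,3,1;-2,2,4;3,1,3] := by
    ext i j
    rw [Algebra.leftMulMatrix_eq_repr_mul]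
    fin_cases j
    · rw [repr_eq' ![-1,-2,3] _ (by rw [B_apply]; push_cast; simp [yK]; ring) i]
      fin_cases i <;> simp [Matrix.vecHead, Matrix.vecTail]
    · rw [repr_eq' ![3,2,1] _ (by rw [B_apply]; push_cast; simp [yK]; linear_combination (3:K3)*hθ3) i]
      fin_cases i <;> simp [Matrix.vecHead, Matrix.vecTail]
    · rw [repr_eq' ![1,4,3] _ (by rw [B_apply]; push_cast; simp [yK]; linear_combination (3*θ+1)*hθ3) i]
      fin_cases i <;> simp [Matrix.vecHead, Matrix.vecTail]
  rw [hM, Matrix.det_fin_three]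
  norm_num [Matrix.vecHead, Matrix.vecTail, Matrix.cons_val_two]

lemma finrank_K3 : Module.finrank ℚ K3 = 3 := by
  rw [PowerBasis.finrank pb, pb_dim]

/-- For all positive integers `n, ℓ, m, d` with `1 ≤ d ≤ 9`, one has
`d * 10 ^ m / 9 ≠ c_α ^ ℓ * α ^ (ℓ * n + ℓ * (ℓ - 1) / 2)` as real numbers, where `α` is the
unique real root of `x ^ 3 - x ^ 2 - x - 1 = 0` and `c_α = 1 / (3 * α ^ 2 - 2 * α - 1)`. -/
theorem repdigit_ne_power_expression (α : ℝ) (hroot : α ^ 3 - α ^ 2 - α - 1 = 0)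
    (cα : ℝ) (hc : cα = 1 / (3 * α ^ 2 - 2 * α - 1))
    (n ℓ m d : ℕ) (hn : 0 < n) (hℓ : 0 < ℓ) (hm : 0 < m) (hd1 : 1 ≤ d) (hd9 : d ≤ 9) :
    (d : ℝ) * 10 ^ m / 9 ≠ cα ^ ℓ * α ^ (ℓ * n + ℓ * (ℓ - 1) / 2) := by
  intro h
  set k : ℕ := ℓ * n + ℓ * (ℓ - 1) / 2 with hk
  have hα1 : 1 < α := by
    by_contra h'
    push_neg at h'
    nlinarith [sq_nonneg α, sq_nonneg (α - 1), sq_nonneg (α + 1)]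
  have hy : 0 < 3 * α ^ 2 - 2 * α - 1 := by nlinarith
  have hyl : 0 < (3 * α ^ 2 - 2 * α - 1) ^ ℓ := pow_pos hy ℓ
  have E : (d : ℝ) * 10 ^ m * (3 * α ^ 2 - 2 * α - 1) ^ ℓ = 9 * α ^ k := by
    rw [hc, div_pow, one_pow] at h
    field_simp at h
    have hh : α * (3 * α - 2) - 1 = 3 * α ^ 2 - 2 * α - 1 := by ring
    rw [hh, eq_div_iff hyl.ne'] at h
    linarith
  have hα0 : P3.eval₂ (algebraMap ℚ ℝ) α = 0 := by
    simp [P3]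
    linear_combination hroot
  set φ : K3 →+* ℝ := AdjoinRoot.lift (algebraMap ℚ ℝ) α hα0 with hφ
  have hφθ : φ θ = α := AdjoinRoot.lift_root hα0
  have hφq : ∀ q : ℚ, φ (algebraMap ℚ K3 q) = (q : ℝ) := by
    intro q
    show AdjoinRoot.lift (algebraMap ℚ ℝ) α hα0 (AdjoinRoot.of P3 q) = _
    rw [AdjoinRoot.lift_of]
    rfl
  have huv : algebraMap ℚ K3 ((d : ℚ) * 10 ^ m) * yK ^ ℓ = algebraMap ℚ K3 9 * θ ^ k := by
    have hφy : φ yK = 3 * α ^ 2 - 2 * α - 1 := by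
      simp [yK, map_sub, map_mul, map_pow, map_ofNat, hφθ]
    apply φ.injective
    simp only [map_mul, map_pow, hφq, hφθ, hφy]
    push_cast
    linear_combination E
  have hnorm := congrArg (Algebra.norm ℚ) huv
  simp only [map_mul, map_pow, norm_yK, norm_θ, Algebra.norm_algebraMap, finrank_K3,
    one_pow, mul_one] at hnorm
  rw [pow_right_comm] at hnorm
  have hnorm' : ((d : ℚ) * 10 ^ m) ^ 3 * 44 ^ ℓ = 729 := by linear_combination hnorm
  have h10 : (10 : ℚ) ≤ (d : ℚ) * 10 ^ m := by
    have h1 : (1 : ℚ) ≤ (d : ℚ) := by exact_mod_cast hd1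
    have h2 : (10 : ℚ) ≤ 10 ^ m := le_self_pow₀ (by norm_num) hm.ne'
    nlinarith
  have h44 : (44 : ℚ) ≤ 44 ^ ℓ := le_self_pow₀ (by norm_num) hℓ.ne'
  have h1000 : (1000 : ℚ) ≤ ((d : ℚ) * 10 ^ m) ^ 3 := by
    calc (1000 : ℚ) = 10 ^ 3 := by norm_num
    _ ≤ ((d : ℚ) * 10 ^ m) ^ 3 := pow_le_pow_left₀ (by norm_num) h10 3
  nlinarith [hnorm', h1000, h44]
end
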